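/- (Theorem 1.2, case p = n, pointwise version.) Let n ≥ 2 and let u : ℝⁿ \ {0} → ℝ be twice continuously differentiable. Write q(x) = ⟨Mx, x⟩ = H(x)², T_H(x) = Mx/q(x), and set u*(x) = u(T_H(x)). Let x ≠ 0 and assume ∇u(T_H(x)) ≠ 0 (this hypothesis may be dropped when n = 2). Then div(⟨M⁻¹∇u*, ∇u*⟩^{(n-2)/2} M⁻¹∇u*)(x) = [div(⟨M∇u, ∇u⟩^{(n-2)/2} M∇u)](T_H(x)) / q(x)^{n}; that is, Δ_n^{H*} u* = ((Δ_n^H u) ∘ T_H)/H^{2n} pointwise where defined. -/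

import Mathlib

open scoped RealInnerProductSpace

set_option maxHeartbeats 2000000

namespace Stmt13

variable {n : ℕ} {M : Matrix (Fin n) (Fin n) ℝ}

noncomputable def Lc (M : Matrix (Fin n) (Fin n) ℝ) :
    EuclideanSpace ℝ (Fin n) →L[ℝ] EuclideanSpace ℝ (Fin n) :=
  LinearMap.toContinuousLinearMap (Matrix.toEuclideanLin M)

lemma Lc_apply (v : EuclideanSpace ℝ (Fin n)) : Lc M v = Matrix.toEuclideanLin M v := rfl

lemma Lc_coord (v : EuclideanSpace ℝ (Fin n)) (i : Fin n) :
    Lc M v i = ∑ j, M i j * v j := by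
  simp [Lc_apply, Matrix.toEuclideanLin_apply, Matrix.mulVec, dotProduct]

lemma sum_single (v : EuclideanSpace ℝ (Fin n)) :
    ∑ i, v i • (EuclideanSpace.single i 1 : EuclideanSpace ℝ (Fin n)) = v := by
  have := (EuclideanSpace.basisFun (Fin n) ℝ).sum_repr v
  simpa [EuclideanSpace.basisFun_apply, EuclideanSpace.basisFun_repr] using this

lemma inner_eq_sum (v w : EuclideanSpace ℝ (Fin n)) : ⟪v, w⟫ = ∑ i, v i * w i := by
  simp [PiLp.inner_apply, RCLike.inner_apply, starRingEnd_apply, mul_comm]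

-- symmetry
lemma inner_Lc_left (hM : M.IsHermitian) (v w : EuclideanSpace ℝ (Fin n)) :
    ⟪Lc M v, w⟫ = ⟪v, Lc M w⟫ := by
  simp only [inner_eq_sum, Lc_coord]
  have hsym : ∀ i j, M i j = M j i := fun i j => by
    have := congrFun (congrFun hM.symm j) i
    simpa [Matrix.conjTranspose_apply] using this.symm
  calc ∑ i, (∑ j, M i j * v j) * w i = ∑ i, ∑ j, v j * (M j i * w i) := by
        refine Finset.sum_congr rfl fun i _ => ?_
        rw [Finset.sum_mul]
        exact Finset.sum_congr rfl fun j _ => by rw [hsym i j]; ring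
    _ = ∑ j, v j * ∑ i, M j i * w i := by
        rw [Finset.sum_comm]
        exact Finset.sum_congr rfl fun j _ => by rw [Finset.mul_sum]

lemma Lc_inv_Lc (hM : M.PosDef) (v : EuclideanSpace ℝ (Fin n)) :
    Lc M⁻¹ (Lc M v) = v := by
  simp only [Lc_apply, Matrix.toEuclideanLin_apply]
  simp [Matrix.mulVec_mulVec, Matrix.nonsing_inv_mul M hM.det_pos.ne'.isUnit]

lemma Lc_Lc_inv (hM : M.PosDef) (v : EuclideanSpace ℝ (Fin n)) :
    Lc M (Lc M⁻¹ v) = v := by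
  simp only [Lc_apply, Matrix.toEuclideanLin_apply]
  simp [Matrix.mulVec_mulVec, Matrix.mul_nonsing_inv M hM.det_pos.ne'.isUnit]

lemma Minv_herm (hM : M.PosDef) : (M⁻¹).IsHermitian := (Matrix.PosDef.inv hM).1

lemma inner_Lc_pos (hM : M.PosDef) {v : EuclideanSpace ℝ (Fin n)} (hv : v ≠ 0) :
    0 < ⟪Lc M v, v⟫ := by
  have h := hM.dotProduct_mulVec_pos (x := (WithLp.equiv 2 (Fin n → ℝ)) v) (by simpa using hv)
  simp only [star_trivial] at h
  have heq : ⟪Lc M v, v⟫ = dotProduct ((WithLp.equiv 2 (Fin n → ℝ)) v)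
      (M.mulVec ((WithLp.equiv 2 (Fin n → ℝ)) v)) := by
    simp only [inner_eq_sum, Lc_coord, dotProduct, Matrix.mulVec, WithLp.equiv_apply]
    exact Finset.sum_congr rfl fun i _ => by ring
  rw [heq]; exact h

lemma inner_Lc_nonneg (hM : M.PosDef) (v : EuclideanSpace ℝ (Fin n)) :
    0 ≤ ⟪Lc M v, v⟫ := by
  rcases eq_or_ne v 0 with h | h
  · simp [h]
  · exact (inner_Lc_pos hM h).le

lemma inner_Lc_Lcinv (hM : M.PosDef) (v w : EuclideanSpace ℝ (Fin n)) :
    ⟪Lc M v, Lc M⁻¹ w⟫ = ⟪v, w⟫ := by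
  rw [inner_Lc_left hM.1, Lc_Lc_inv hM]

lemma coord_sum (w : Fin n → EuclideanSpace ℝ (Fin n)) (c : Fin n → ℝ) (i : Fin n) :
    (∑ k, c k • w k) i = ∑ k, c k * (w k) i := by
  classical
  induction (Finset.univ : Finset (Fin n)) using Finset.induction_on with
  | empty => rfl
  | insert _ _ hk ih =>
      rw [Finset.sum_insert hk, Finset.sum_insert hk, ← ih]
      rfl

lemma map_eq_sum (B : EuclideanSpace ℝ (Fin n) →L[ℝ] EuclideanSpace ℝ (Fin n))
    (v : EuclideanSpace ℝ (Fin n)) :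
    B v = ∑ i, v i • B (EuclideanSpace.single i 1) := by
  conv_lhs => rw [← sum_single v]
  rw [map_sum]
  exact Finset.sum_congr rfl fun i _ => by rw [map_smul]

lemma Lc_single (i : Fin n) :
    Lc M (EuclideanSpace.single i 1) = ∑ k, M k i • (EuclideanSpace.single k 1 :
      EuclideanSpace ℝ (Fin n)) := by
  rw [← sum_single (Lc M (EuclideanSpace.single i 1))]
  refine Finset.sum_congr rfl fun k _ => ?_
  congr 1
  rw [Lc_coord]
  simp [EuclideanSpace.single_apply]

lemma trace_identity (hM : M.PosDef)
    (P : EuclideanSpace ℝ (Fin n) →L[ℝ] EuclideanSpace ℝ (Fin n)) :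
    ∑ i, (Lc M⁻¹ (P (Lc M (EuclideanSpace.single i 1)))) i
      = ∑ i, (P (EuclideanSpace.single i 1)) i := by
  have h1 : ∀ i : Fin n, (Lc M⁻¹ (P (Lc M (EuclideanSpace.single i 1)))) i
      = ∑ k, M k i * (Lc M⁻¹ (P (EuclideanSpace.single k 1))) i := by
    intro i
    rw [Lc_single, map_sum, map_sum]
    have : ∀ k : Fin n, Lc M⁻¹ (P (M k i • (EuclideanSpace.single k 1 :
        EuclideanSpace ℝ (Fin n)))) = M k i • Lc M⁻¹ (P (EuclideanSpace.single k 1)) := by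
      intro k; rw [map_smul, map_smul]
    rw [Finset.sum_congr rfl fun k _ => this k]
    exact coord_sum _ _ i
  rw [Finset.sum_congr rfl fun i _ => h1 i, Finset.sum_comm]
  refine Finset.sum_congr rfl fun k _ => ?_
  have h2 : ∀ i : Fin n, (Lc M⁻¹ (P (EuclideanSpace.single k 1))) i
      = ∑ j, M⁻¹ i j * (P (EuclideanSpace.single k 1)) j := fun i => Lc_coord _ i
  calc ∑ i, M k i * (Lc M⁻¹ (P (EuclideanSpace.single k 1))) i
      = ∑ i, ∑ j, M k i * (M⁻¹ i j * (P (EuclideanSpace.single k 1)) j) := by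
        refine Finset.sum_congr rfl fun i _ => ?_
        rw [h2 i, Finset.mul_sum]
    _ = ∑ j, (∑ i, M k i * M⁻¹ i j) * (P (EuclideanSpace.single k 1)) j := by
        rw [Finset.sum_comm]
        refine Finset.sum_congr rfl fun j _ => ?_
        rw [Finset.sum_mul]
        exact Finset.sum_congr rfl fun i _ => by ring
    _ = (P (EuclideanSpace.single k 1)) k := by
        have hMM : ∀ j, ∑ i, M k i * M⁻¹ i j = if k = j then 1 else 0 := by
          intro j
          have := congrFun (congrFun (Matrix.mul_nonsing_inv M hM.det_pos.ne'.isUnit) k) j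
          simpa [Matrix.mul_apply, Matrix.one_apply] using this
        rw [Finset.sum_congr rfl fun j _ => by rw [hMM j]]
        simp

lemma hasFDerivAt_q (hM : M.IsHermitian) (z : EuclideanSpace ℝ (Fin n)) :
    HasFDerivAt (fun w : EuclideanSpace ℝ (Fin n) => ⟪(Lc M) w, w⟫)
      ((2:ℝ) • (innerSL ℝ ((Lc M) z))) z := by
  have h := ((Lc M).hasFDerivAt (x := z)).inner ℝ (hasFDerivAt_id z)
  refine h.congr_fderiv (Eq.symm ?_)
  ext w
  simp only [ContinuousLinearMap.smul_apply, innerSL_apply_apply, ContinuousLinearMap.comp_apply,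
    ContinuousLinearMap.prod_apply, fderivInnerCLM_apply, ContinuousLinearMap.id_apply,
    smul_eq_mul]
  rw [inner_Lc_left hM, real_inner_comm]
  simp only [id_eq]
  ring


lemma sum_inner_reconstruct
    (B C : EuclideanSpace ℝ (Fin n) →L[ℝ] EuclideanSpace ℝ (Fin n))
    (v w : EuclideanSpace ℝ (Fin n)) :
    ∑ i, ⟪w, B (C (EuclideanSpace.single i 1))⟫ * v i = ⟪w, B (C v)⟫ := by
  conv_rhs => rw [← sum_single v, map_sum, map_sum, inner_sum]
  refine Finset.sum_congr rfl fun i _ => ?_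
  rw [map_smul, map_smul, real_inner_smul_right]
  ring

lemma div_transform (hM : M.PosDef) (m : ℕ) (hnm : n = m + 2) {x : EuclideanSpace ℝ (Fin n)} (hx : x ≠ 0)
    (F : EuclideanSpace ℝ (Fin n) → EuclideanSpace ℝ (Fin n))
    (DF : EuclideanSpace ℝ (Fin n) →L[ℝ] EuclideanSpace ℝ (Fin n))
    (hF : HasFDerivAt F DF ((⟪Lc M x, x⟫)⁻¹ • Lc M x)) :
    ∑ i, (fderiv ℝ (fun z => ((⟪Lc M z, z⟫ : ℝ) ^ (m+1))⁻¹ •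
        (Lc M⁻¹ (F ((⟪Lc M z, z⟫)⁻¹ • Lc M z))
          - (2 * ⟪z, F ((⟪Lc M z, z⟫)⁻¹ • Lc M z)⟫ * (⟪Lc M z, z⟫)⁻¹) • z)) x
        (EuclideanSpace.single i 1)) i
      = (∑ i, (DF (EuclideanSpace.single i 1)) i) / ⟪Lc M x, x⟫ ^ (m+2) := by
  have hQpos : 0 < ⟪Lc M x, x⟫ := inner_Lc_pos hM hx
  have hQ : ⟪Lc M x, x⟫ ≠ 0 := hQpos.ne'
  -- derivative of q₀
  have hq0 : HasFDerivAt (fun w : EuclideanSpace ℝ (Fin n) => ⟪(Lc M) w, w⟫)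
      ((2:ℝ) • (innerSL ℝ ((Lc M) x))) x := hasFDerivAt_q hM.1 x
  -- derivative of (q₀)⁻¹
  have hqinv : HasFDerivAt (fun z : EuclideanSpace ℝ (Fin n) => (⟪Lc M z, z⟫)⁻¹)
      ((-(⟪Lc M x, x⟫ ^ 2)⁻¹) • ((2:ℝ) • (innerSL ℝ ((Lc M) x)))) x :=
    (hasDerivAt_inv hQ).comp_hasFDerivAt (f := fun w : EuclideanSpace ℝ (Fin n) => ⟪(Lc M) w, w⟫) x hq0
  -- derivative of T₀
  have hT : HasFDerivAt (fun z : EuclideanSpace ℝ (Fin n) => (⟪Lc M z, z⟫)⁻¹ • Lc M z)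
      ((⟪Lc M x, x⟫)⁻¹ • (Lc M : EuclideanSpace ℝ (Fin n) →L[ℝ] EuclideanSpace ℝ (Fin n))
        + ((-(⟪Lc M x, x⟫ ^ 2)⁻¹) • ((2:ℝ) • (innerSL ℝ ((Lc M) x)))).smulRight (Lc M x)) x :=
    hqinv.smul (Lc M).hasFDerivAt
  set DT := (⟪Lc M x, x⟫)⁻¹ • (Lc M : EuclideanSpace ℝ (Fin n) →L[ℝ] EuclideanSpace ℝ (Fin n))
        + ((-(⟪Lc M x, x⟫ ^ 2)⁻¹) • ((2:ℝ) • (innerSL ℝ ((Lc M) x)))).smulRight (Lc M x) with hDT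
  -- derivative of G = F ∘ T₀
  have hG : HasFDerivAt (fun z : EuclideanSpace ℝ (Fin n) =>
      F ((⟪Lc M z, z⟫)⁻¹ • Lc M z)) (DF.comp DT) x := hF.comp x hT
  set G : EuclideanSpace ℝ (Fin n) → EuclideanSpace ℝ (Fin n) :=
    fun z => F ((⟪Lc M z, z⟫)⁻¹ • Lc M z) with hGdef
  -- derivative of z ↦ ⟪z, G z⟫
  have hs : HasFDerivAt (fun z => ⟪z, G z⟫)
      ((fderivInnerCLM ℝ (x, G x)).comp ((ContinuousLinearMap.id ℝ _).prod (DF.comp DT))) x :=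
    (hasFDerivAt_id x).inner ℝ hG
  -- derivative of β
  have hβ : HasFDerivAt (fun z => 2 * ⟪z, G z⟫ * (⟪Lc M z, z⟫)⁻¹)
      ((2 * ⟪x, G x⟫) • ((-(⟪Lc M x, x⟫ ^ 2)⁻¹) • ((2:ℝ) • (innerSL ℝ ((Lc M) x))))
        + (⟪Lc M x, x⟫)⁻¹ • ((2:ℝ) •
          ((fderivInnerCLM ℝ (x, G x)).comp
            ((ContinuousLinearMap.id ℝ _).prod (DF.comp DT))))) x := by
    have h2s : HasFDerivAt (fun z => 2 * ⟪z, G z⟫)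
        ((2:ℝ) • ((fderivInnerCLM ℝ (x, G x)).comp
          ((ContinuousLinearMap.id ℝ _).prod (DF.comp DT)))) x := by
      simpa using hs.const_mul (2:ℝ)
    exact h2s.mul hqinv
  set Dβ := (2 * ⟪x, G x⟫) • ((-(⟪Lc M x, x⟫ ^ 2)⁻¹) • ((2:ℝ) • (innerSL ℝ ((Lc M) x))))
        + (⟪Lc M x, x⟫)⁻¹ • ((2:ℝ) •
          ((fderivInnerCLM ℝ (x, G x)).comp
            ((ContinuousLinearMap.id ℝ _).prod (DF.comp DT)))) with hDβ
  -- derivative of W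
  have hW : HasFDerivAt (fun z => Lc M⁻¹ (G z) - (2 * ⟪z, G z⟫ * (⟪Lc M z, z⟫)⁻¹) • z)
      (((Lc M⁻¹).comp (DF.comp DT))
        - ((2 * ⟪x, G x⟫ * (⟪Lc M x, x⟫)⁻¹) • (ContinuousLinearMap.id ℝ _)
            + Dβ.smulRight x)) x := by
    have h1 : HasFDerivAt (fun z => Lc M⁻¹ (G z)) ((Lc M⁻¹).comp (DF.comp DT)) x :=
      ((Lc M⁻¹).hasFDerivAt).comp x hG
    exact h1.sub (hβ.smul (hasFDerivAt_id x))
  set DW := ((Lc M⁻¹).comp (DF.comp DT))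
        - ((2 * ⟪x, G x⟫ * (⟪Lc M x, x⟫)⁻¹) • (ContinuousLinearMap.id ℝ
            (EuclideanSpace ℝ (Fin n))) + Dβ.smulRight x) with hDW
  -- derivative of α
  have hα : HasFDerivAt (fun z : EuclideanSpace ℝ (Fin n) => ((⟪Lc M z, z⟫ : ℝ) ^ (m+1))⁻¹)
      ((-(↑(m+1) * ⟪Lc M x, x⟫ ^ (m + 1 - 1)) / (⟪Lc M x, x⟫ ^ (m+1)) ^ 2) •
        ((2:ℝ) • (innerSL ℝ ((Lc M) x)))) x :=
    (((hasDerivAt_pow (m+1) (⟪Lc M x, x⟫ : ℝ)).inv (c := fun t : ℝ => t ^ (m+1)) (pow_ne_zero _ hQ))).comp_hasFDerivAt (f := fun w : EuclideanSpace ℝ (Fin n) => ⟪(Lc M) w, w⟫) x hq0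
  -- derivative of Φ
  have hΦ : HasFDerivAt (fun z => ((⟪Lc M z, z⟫ : ℝ) ^ (m+1))⁻¹ •
      (Lc M⁻¹ (F ((⟪Lc M z, z⟫)⁻¹ • Lc M z))
        - (2 * ⟪z, F ((⟪Lc M z, z⟫)⁻¹ • Lc M z)⟫ * (⟪Lc M z, z⟫)⁻¹) • z))
      (((⟪Lc M x, x⟫ ^ (m+1))⁻¹) • DW
        + ((-(↑(m+1) * ⟪Lc M x, x⟫ ^ (m + 1 - 1)) / (⟪Lc M x, x⟫ ^ (m+1)) ^ 2) •
            ((2:ℝ) • (innerSL ℝ ((Lc M) x)))).smulRight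
          (Lc M⁻¹ (G x) - (2 * ⟪x, G x⟫ * (⟪Lc M x, x⟫)⁻¹) • x)) x :=
    hα.smul hW
  rw [Finset.sum_congr rfl (fun i _ => by rw [hΦ.fderiv])]
  -- abbreviations
  set Q := ⟪Lc M x, x⟫ with hQdef
  set P := ⟪x, G x⟫ with hPdef
  set R := ⟪x, DF (Lc M x)⟫ with hRdef
  -- the explicit form of each summand
  have hEval : ∀ i : Fin n,
      ((((Q ^ (m+1))⁻¹) • DW
        + ((-(↑(m+1) * Q ^ (m + 1 - 1)) / (Q ^ (m+1)) ^ 2) •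
            ((2:ℝ) • (innerSL ℝ ((Lc M) x)))).smulRight
          (Lc M⁻¹ (G x) - (2 * P * Q⁻¹) • x)) (EuclideanSpace.single i 1)) i
      = (2 * (-(↑(m+1) * Q ^ m) / (Q ^ (m+1)) ^ 2))
            * ((Lc M x) i * (Lc M⁻¹ (G x)) i)
        + ((-4) * (-(↑(m+1) * Q ^ m) / (Q ^ (m+1)) ^ 2) * P * Q⁻¹
            + (Q ^ (m+1))⁻¹ * (4 * P * (Q^2)⁻¹ + 4 * R * Q⁻¹ * (Q^2)⁻¹))
            * ((Lc M x) i * x i)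
        + ((Q ^ (m+1))⁻¹ * Q⁻¹) * ((Lc M⁻¹ (DF (Lc M (EuclideanSpace.single i 1)))) i)
        + (-2 * (Q ^ (m+1))⁻¹ * (Q^2)⁻¹)
            * ((Lc M x) i * (Lc M⁻¹ (DF (Lc M x))) i)
        + (-2 * (Q ^ (m+1))⁻¹ * Q⁻¹) * ((G x) i * x i)
        + (-2 * (Q ^ (m+1))⁻¹ * Q⁻¹ * Q⁻¹)
            * (⟪x, DF (Lc M (EuclideanSpace.single i 1))⟫ * x i)
        + (-2 * (Q ^ (m+1))⁻¹ * P * Q⁻¹) := by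
    intro i
    simp only [hDW, hDβ, hDT, ContinuousLinearMap.add_apply, ContinuousLinearMap.smul_apply,
      ContinuousLinearMap.coe_sub', Pi.sub_apply, ContinuousLinearMap.comp_apply,
      ContinuousLinearMap.smulRight_apply, ContinuousLinearMap.id_apply,
      ContinuousLinearMap.prod_apply, fderivInnerCLM_apply, innerSL_apply_apply,
      ContinuousLinearMap.coe_smul', Pi.smul_apply, map_add, map_smul,
      inner_add_right, real_inner_smul_right, Prod.fst, Prod.snd,
      EuclideanSpace.inner_single_left, EuclideanSpace.inner_single_right,
      PiLp.add_apply, PiLp.sub_apply, PiLp.smul_apply, EuclideanSpace.single_apply,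
      smul_eq_mul, starRingEnd_apply, star_trivial, Nat.add_sub_cancel,
      eq_self_iff_true, if_true]
    ring
  rw [Finset.sum_congr rfl fun i _ => hEval i]
  -- evaluate the atomic sums
  have S1 : ∑ i, (Lc M x) i * (Lc M⁻¹ (G x)) i = P := by
    rw [← inner_eq_sum, inner_Lc_Lcinv hM]
  have S2 : ∑ i, (Lc M x) i * x i = Q := by rw [← inner_eq_sum]
  have S3 : ∑ i, (Lc M⁻¹ (DF (Lc M (EuclideanSpace.single i 1)))) i
      = ∑ i, (DF (EuclideanSpace.single i 1)) i := trace_identity hM DF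
  have S4 : ∑ i, (Lc M x) i * (Lc M⁻¹ (DF (Lc M x))) i = R := by
    rw [← inner_eq_sum, inner_Lc_Lcinv hM]
  have S5 : ∑ i, (G x) i * x i = P := by
    rw [← inner_eq_sum, real_inner_comm]
  have S6 : ∑ i, ⟪x, DF (Lc M (EuclideanSpace.single i 1))⟫ * x i = R := by
    have := sum_inner_reconstruct DF (Lc M) x x
    simpa using this
  have hcast : ((↑(m+1) : ℝ)) = (m : ℝ) + 1 := by push_cast; ring
  simp only [Finset.sum_add_distrib, ← Finset.mul_sum, S1, S2, S3, S4, S5, S6,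
    Finset.sum_const, Finset.card_univ, Fintype.card_fin, nsmul_eq_mul]
  have hncast : (n : ℝ) = (m : ℝ) + 2 := by rw [hnm]; push_cast; ring
  rw [hncast, hcast]
  have hQm : (Q : ℝ) ^ (m+1) ≠ 0 := pow_ne_zero _ hQ
  field_simp
  ring

lemma hasFDerivAt_T (hM : M.IsHermitian) {z : EuclideanSpace ℝ (Fin n)}
    (hz : (⟪Lc M z, z⟫ : ℝ) ≠ 0) :
    HasFDerivAt (fun w : EuclideanSpace ℝ (Fin n) => (⟪Lc M w, w⟫)⁻¹ • Lc M w)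
      ((⟪Lc M z, z⟫)⁻¹ • (Lc M : EuclideanSpace ℝ (Fin n) →L[ℝ] EuclideanSpace ℝ (Fin n))
        + ((-(⟪Lc M z, z⟫ ^ 2)⁻¹) • ((2:ℝ) • (innerSL ℝ ((Lc M) z)))).smulRight (Lc M z)) z := by
  have hq0 := hasFDerivAt_q hM z
  have hqinv : HasFDerivAt (fun w : EuclideanSpace ℝ (Fin n) => (⟪Lc M w, w⟫)⁻¹)
      ((-(⟪Lc M z, z⟫ ^ 2)⁻¹) • ((2:ℝ) • (innerSL ℝ ((Lc M) z)))) z :=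
    (hasDerivAt_inv hz).comp_hasFDerivAt
      (f := fun w : EuclideanSpace ℝ (Fin n) => ⟪(Lc M) w, w⟫) z hq0
  exact hqinv.smul (Lc M).hasFDerivAt

lemma gradient_eq_sum (f : EuclideanSpace ℝ (Fin n) → ℝ) (w : EuclideanSpace ℝ (Fin n)) :
    gradient f w = ∑ i, (fderiv ℝ f w (EuclideanSpace.single i 1)) •
      (EuclideanSpace.single i 1 : EuclideanSpace ℝ (Fin n)) := by
  by_cases hd : DifferentiableAt ℝ f w
  · have h : HasFDerivAt f ((InnerProductSpace.toDual ℝ _) (gradient f w)) w :=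
      hasGradientAt_iff_hasFDerivAt.mp hd.hasGradientAt
    rw [h.fderiv]
    conv_lhs => rw [← sum_single (gradient f w)]
    refine Finset.sum_congr rfl fun i _ => ?_
    rw [InnerProductSpace.toDual_apply_apply, EuclideanSpace.inner_single_right]
    simp
  · rw [gradient_eq_zero_of_not_differentiableAt hd, fderiv_zero_of_not_differentiableAt hd]
    simp

lemma differentiableAt_gradient {u : EuclideanSpace ℝ (Fin n) → ℝ}
    {y : EuclideanSpace ℝ (Fin n)} (hu2 : ContDiffAt ℝ 2 u y) :
    DifferentiableAt ℝ (gradient u) y := by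
  have h1 : DifferentiableAt ℝ (fderiv ℝ u) y := by
    have := hu2.fderiv_right (m := 1) (by norm_num)
    exact this.differentiableAt (by norm_num)
  have h2 : ∀ i : Fin n, DifferentiableAt ℝ
      (fun w => fderiv ℝ u w (EuclideanSpace.single i 1)) y := fun i =>
    h1.clm_apply (differentiableAt_const _)
  have h3 : DifferentiableAt ℝ (fun w => ∑ i, (fderiv ℝ u w (EuclideanSpace.single i 1)) •
      (EuclideanSpace.single i 1 : EuclideanSpace ℝ (Fin n))) y :=
    DifferentiableAt.fun_sum fun i _ => (h2 i).smul (differentiableAt_const _)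
  have : (gradient u) = fun w => ∑ i, (fderiv ℝ u w (EuclideanSpace.single i 1)) •
      (EuclideanSpace.single i 1 : EuclideanSpace ℝ (Fin n)) :=
    funext fun w => gradient_eq_sum u w
  rw [this]
  exact h3

lemma gradient_comp (hM : M.IsHermitian) {z : EuclideanSpace ℝ (Fin n)}
    (hz : (⟪Lc M z, z⟫ : ℝ) ≠ 0) {u : EuclideanSpace ℝ (Fin n) → ℝ}
    (hud : DifferentiableAt ℝ u ((⟪Lc M z, z⟫)⁻¹ • Lc M z)) :
    gradient (fun w => u ((⟪Lc M w, w⟫)⁻¹ • Lc M w)) z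
      = (⟪Lc M z, z⟫)⁻¹ • Lc M (gradient u ((⟪Lc M z, z⟫)⁻¹ • Lc M z))
        + (-(⟪Lc M z, z⟫ ^ 2)⁻¹ *
            (2 * ⟪Lc M z, gradient u ((⟪Lc M z, z⟫)⁻¹ • Lc M z)⟫)) • Lc M z := by
  set yz := (⟪Lc M z, z⟫)⁻¹ • Lc M z with hyz
  set gz := gradient u yz with hgz
  have hgrad : HasGradientAt u gz yz := hud.hasGradientAt
  have hfd : HasFDerivAt u ((InnerProductSpace.toDual ℝ _) gz) yz :=
    hasGradientAt_iff_hasFDerivAt.mp hgrad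
  have hT := hasFDerivAt_T hM hz
  have hcomp : HasFDerivAt (fun w => u ((⟪Lc M w, w⟫)⁻¹ • Lc M w))
      (((InnerProductSpace.toDual ℝ _) gz).comp
        ((⟪Lc M z, z⟫)⁻¹ • (Lc M : EuclideanSpace ℝ (Fin n) →L[ℝ] EuclideanSpace ℝ (Fin n))
          + ((-(⟪Lc M z, z⟫ ^ 2)⁻¹) • ((2:ℝ) • (innerSL ℝ ((Lc M) z)))).smulRight (Lc M z))) z :=
    hfd.comp z hT
  have hkey : ((InnerProductSpace.toDual ℝ _) gz).comp
      ((⟪Lc M z, z⟫)⁻¹ • (Lc M : EuclideanSpace ℝ (Fin n) →L[ℝ] EuclideanSpace ℝ (Fin n))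
        + ((-(⟪Lc M z, z⟫ ^ 2)⁻¹) • ((2:ℝ) • (innerSL ℝ ((Lc M) z)))).smulRight (Lc M z))
      = (InnerProductSpace.toDual ℝ _)
          ((⟪Lc M z, z⟫)⁻¹ • Lc M gz
            + (-(⟪Lc M z, z⟫ ^ 2)⁻¹ * (2 * ⟪Lc M z, gz⟫)) • Lc M z) := by
    refine ContinuousLinearMap.ext fun v => ?_
    simp only [ContinuousLinearMap.comp_apply, ContinuousLinearMap.add_apply,
      ContinuousLinearMap.smul_apply, ContinuousLinearMap.smulRight_apply,
      ContinuousLinearMap.coe_smul', Pi.smul_apply, innerSL_apply_apply,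
      InnerProductSpace.toDual_apply_apply, inner_add_left, inner_add_right,
      real_inner_smul_left, real_inner_smul_right, smul_eq_mul]
    rw [← inner_Lc_left hM gz v, real_inner_comm gz (Lc M z)]
    ring
  have : HasGradientAt (fun w => u ((⟪Lc M w, w⟫)⁻¹ • Lc M w))
      ((⟪Lc M z, z⟫)⁻¹ • Lc M gz
        + (-(⟪Lc M z, z⟫ ^ 2)⁻¹ * (2 * ⟪Lc M z, gz⟫)) • Lc M z) z := by
    rw [hasGradientAt_iff_hasFDerivAt]
    rw [← hkey]
    exact hcomp
  exact this.gradient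

end Stmt13

open Stmt13 in
/-- Theorem 1.2, case p = n, pointwise version: Let `u` be `C²` on
`ℝⁿ \ {0}`, `q(x) = ⟨Mx, x⟩`, `T_H(x) = Mx/q(x)` and `u*(x) = u(T_H(x))`. Let `x ≠ 0` and
assume `∇u(T_H(x)) ≠ 0` (a hypothesis that may be dropped when `n = 2`). Then
`div(⟨M⁻¹∇u*, ∇u*⟩^{(n-2)/2} M⁻¹∇u*)(x) = [div(⟨M∇u, ∇u⟩^{(n-2)/2} M∇u)](T_H(x)) / q(x)ⁿ`,
i.e. `Δ_n^{H*} u* = ((Δ_n^H u) ∘ T_H)/H^{2n}` pointwise where defined. The divergence of a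
field `F` at `z` is `Σ_i (fderiv ℝ F z (EuclideanSpace.single i 1)) i`; powers are
`Real.rpow`. -/
theorem stmt_13 {n : ℕ} (hn : 2 ≤ n)
    (M : Matrix (Fin n) (Fin n) ℝ) (hM : M.PosDef)
    (u : EuclideanSpace ℝ (Fin n) → ℝ)
    (hu : ContDiffOn ℝ 2 u ({0}ᶜ : Set (EuclideanSpace ℝ (Fin n))))
    (q : EuclideanSpace ℝ (Fin n) → ℝ)
    (hq : q = fun x => ⟪Matrix.toEuclideanLin M x, x⟫)
    (TH : EuclideanSpace ℝ (Fin n) → EuclideanSpace ℝ (Fin n))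
    (hTH : TH = fun x => (q x)⁻¹ • Matrix.toEuclideanLin M x)
    (ustar : EuclideanSpace ℝ (Fin n) → ℝ) (hustar : ustar = fun x => u (TH x))
    (x : EuclideanSpace ℝ (Fin n)) (hx : x ≠ 0)
    (hgrad : gradient u (TH x) ≠ 0 ∨ n = 2) :
    ∑ i : Fin n,
        fderiv ℝ (fun y =>
            ⟪Matrix.toEuclideanLin M⁻¹ (gradient ustar y), gradient ustar y⟫ ^ (((n : ℝ) - 2) / 2)
              • Matrix.toEuclideanLin M⁻¹ (gradient ustar y)) x
          (EuclideanSpace.single i 1) i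
      = (∑ i : Fin n,
          fderiv ℝ (fun y =>
              ⟪Matrix.toEuclideanLin M (gradient u y), gradient u y⟫ ^ (((n : ℝ) - 2) / 2)
                • Matrix.toEuclideanLin M (gradient u y)) (TH x)
            (EuclideanSpace.single i 1) i) / q x ^ n := by
  have hL : ∀ v, Matrix.toEuclideanLin M v = Lc M v := fun _ => rfl
  have hL' : ∀ v, Matrix.toEuclideanLin M⁻¹ v = Lc M⁻¹ v := fun _ => rfl
  obtain ⟨m, hnm⟩ : ∃ m, n = m + 2 := ⟨n - 2, (Nat.sub_add_cancel hn).symm⟩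
  subst hustar hTH hq
  simp only [hL, hL'] at hgrad ⊢
  set yx := (⟪Lc M x, x⟫ : ℝ)⁻¹ • Lc M x with hyx
  set Fs := fun w => (⟪Lc M (gradient u w), gradient u w⟫ : ℝ) ^ (((n : ℝ) - 2) / 2)
      • Lc M (gradient u w) with hFs
  set DF := fderiv ℝ Fs yx with hDF
  have hQpos : 0 < (⟪Lc M x, x⟫ : ℝ) := inner_Lc_pos hM hx
  have hQne : (⟪Lc M x, x⟫ : ℝ) ≠ 0 := hQpos.ne'
  -- yx ≠ 0
  have hyx0 : yx ≠ 0 := by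
    intro h
    have h1 : ⟪yx, x⟫ = (0:ℝ) := by rw [h]; exact inner_zero_left x
    rw [hyx, real_inner_smul_left, inv_mul_cancel₀ hQne] at h1
    exact one_ne_zero h1
  have hu2 : ContDiffAt ℝ 2 u yx :=
    hu.contDiffAt (isOpen_compl_singleton.mem_nhds (by simpa using hyx0))
  have hgdiff : DifferentiableAt ℝ (gradient u) yx := differentiableAt_gradient hu2
  have hLg : DifferentiableAt ℝ (fun w => Lc M (gradient u w)) yx :=
    DifferentiableAt.comp yx (Lc M).differentiableAt hgdiff
  -- differentiability of Fs at yx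
  have hFdiff : DifferentiableAt ℝ Fs yx := by
    rcases hgrad with hg | h2
    · have hcpos : 0 < (⟪Lc M (gradient u yx), gradient u yx⟫ : ℝ) := inner_Lc_pos hM hg
      have hinner : DifferentiableAt ℝ (fun w => (⟪Lc M (gradient u w), gradient u w⟫ : ℝ)) yx :=
        hLg.inner ℝ hgdiff
      have hrpow : DifferentiableAt ℝ
          (fun w => (⟪Lc M (gradient u w), gradient u w⟫ : ℝ) ^ (((n : ℝ) - 2) / 2)) yx :=
        hinner.rpow_const (Or.inl hcpos.ne')
      rw [hFs]
      exact hrpow.smul hLg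
    · have he0 : ((n : ℝ) - 2) / 2 = 0 := by rw [h2]; norm_num
      rw [hFs]
      simp only [he0, Real.rpow_zero, one_smul]
      exact hLg
  have hF : HasFDerivAt Fs DF yx := hFdiff.hasFDerivAt
  -- the eventual equality between the H*-field of u* and the transformed field
  have hEE : (fun z => (⟪Lc M⁻¹ (gradient (fun x => u ((⟪Lc M x, x⟫ : ℝ)⁻¹ • Lc M x)) z),
        gradient (fun x => u ((⟪Lc M x, x⟫ : ℝ)⁻¹ • Lc M x)) z⟫ : ℝ) ^ (((n : ℝ) - 2) / 2)
          • Lc M⁻¹ (gradient (fun x => u ((⟪Lc M x, x⟫ : ℝ)⁻¹ • Lc M x)) z))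
      =ᶠ[nhds x] (fun z => ((⟪Lc M z, z⟫ : ℝ) ^ (m+1))⁻¹ •
        (Lc M⁻¹ (Fs ((⟪Lc M z, z⟫)⁻¹ • Lc M z))
          - (2 * ⟪z, Fs ((⟪Lc M z, z⟫)⁻¹ • Lc M z)⟫ * (⟪Lc M z, z⟫)⁻¹) • z)) := by
    filter_upwards [isOpen_compl_singleton.mem_nhds
      (show x ∈ ({0}ᶜ : Set (EuclideanSpace ℝ (Fin n))) by simpa using hx)] with z hz
    have hz0 : z ≠ 0 := by simpa using hz
    have hqz : 0 < (⟪Lc M z, z⟫ : ℝ) := inner_Lc_pos hM hz0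
    have hqzne : (⟪Lc M z, z⟫ : ℝ) ≠ 0 := hqz.ne'
    have hyz0 : ((⟪Lc M z, z⟫ : ℝ)⁻¹ • Lc M z : EuclideanSpace ℝ (Fin n)) ≠ 0 := by
      intro h
      have h1 : ⟪((⟪Lc M z, z⟫ : ℝ)⁻¹ • Lc M z : EuclideanSpace ℝ (Fin n)), z⟫ = (0:ℝ) := by
        rw [h]; exact inner_zero_left z
      rw [real_inner_smul_left, inv_mul_cancel₀ hqzne] at h1
      exact one_ne_zero h1
    have hudz : DifferentiableAt ℝ u ((⟪Lc M z, z⟫ : ℝ)⁻¹ • Lc M z) :=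
      (hu.contDiffAt (isOpen_compl_singleton.mem_nhds (by simpa using hyz0))).differentiableAt
        (by norm_num)
    have hgc := gradient_comp hM.1 hqzne hudz
    rw [hgc]
    simp only [hFs]
    set gz := gradient u ((⟪Lc M z, z⟫ : ℝ)⁻¹ • Lc M z) with hgzdef
    set s := (⟪Lc M z, gz⟫ : ℝ) with hsdef
    have hcnn : 0 ≤ (⟪Lc M gz, gz⟫ : ℝ) := inner_Lc_nonneg hM gz
    have step1 : Lc M⁻¹ ((⟪Lc M z, z⟫ : ℝ)⁻¹ • Lc M gz
        + (-(⟪Lc M z, z⟫ ^ 2 : ℝ)⁻¹ * (2 * s)) • Lc M z)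
        = (⟪Lc M z, z⟫ : ℝ)⁻¹ • gz + (-(⟪Lc M z, z⟫ ^ 2 : ℝ)⁻¹ * (2 * s)) • z := by
      rw [map_add, map_smul, map_smul, Lc_inv_Lc hM, Lc_inv_Lc hM]
    have e2 : (⟪gz, Lc M z⟫ : ℝ) = s := by rw [real_inner_comm]
    have e3 : (⟪z, Lc M gz⟫ : ℝ) = s := by rw [← inner_Lc_left hM.1 z gz]
    have e4 : (⟪z, Lc M z⟫ : ℝ) = ⟪Lc M z, z⟫ := real_inner_comm _ _
    have e1 : (⟪gz, Lc M gz⟫ : ℝ) = ⟪Lc M gz, gz⟫ := real_inner_comm _ _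
    have step2 : (⟪Lc M⁻¹ ((⟪Lc M z, z⟫ : ℝ)⁻¹ • Lc M gz
        + (-(⟪Lc M z, z⟫ ^ 2 : ℝ)⁻¹ * (2 * s)) • Lc M z),
          (⟪Lc M z, z⟫ : ℝ)⁻¹ • Lc M gz + (-(⟪Lc M z, z⟫ ^ 2 : ℝ)⁻¹ * (2 * s)) • Lc M z⟫ : ℝ)
        = (⟪Lc M z, z⟫ ^ 2 : ℝ)⁻¹ * ⟪Lc M gz, gz⟫ := by
      rw [step1]
      simp only [inner_add_left, inner_add_right, real_inner_smul_left, real_inner_smul_right]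
      rw [e1, e2, e3, e4]
      generalize (⟪Lc M gz, gz⟫ : ℝ) = c
      generalize hQg : (⟪Lc M z, z⟫ : ℝ) = Q at hqzne ⊢
      field_simp
      ring
    rw [step2]
    have step4 : Lc M⁻¹ ((⟪Lc M gz, gz⟫ : ℝ) ^ (((n : ℝ) - 2) / 2) • Lc M gz)
        = (⟪Lc M gz, gz⟫ : ℝ) ^ (((n : ℝ) - 2) / 2) • gz := by
      rw [map_smul, Lc_inv_Lc hM]
    have step5 : (⟪z, (⟪Lc M gz, gz⟫ : ℝ) ^ (((n : ℝ) - 2) / 2) • Lc M gz⟫ : ℝ)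
        = (⟪Lc M gz, gz⟫ : ℝ) ^ (((n : ℝ) - 2) / 2) * s := by
      rw [real_inner_smul_right, e3]
    rw [step4, step5]
    -- key scalar computation
    have hkey : ((⟪Lc M z, z⟫ ^ 2 : ℝ)⁻¹ * ⟪Lc M gz, gz⟫) ^ (((n : ℝ) - 2) / 2)
        = ((⟪Lc M z, z⟫ : ℝ) ^ m)⁻¹ * (⟪Lc M gz, gz⟫ : ℝ) ^ (((n : ℝ) - 2) / 2) := by
      rw [Real.mul_rpow (by positivity) hcnn]
      congr 1
      have he : ((n : ℝ) - 2) / 2 = (m : ℝ) / 2 := by rw [hnm]; push_cast; ring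
      rw [he]
      rw [← Real.rpow_natCast (⟪Lc M z, z⟫ : ℝ) 2, ← Real.rpow_neg hqz.le,
        ← Real.rpow_natCast (⟪Lc M z, z⟫ : ℝ) m, ← Real.rpow_neg hqz.le,
        ← Real.rpow_mul hqz.le]
      congr 1
      push_cast
      ring
    rw [step1, hkey]
    match_scalars
    · generalize (⟪Lc M gz, gz⟫ : ℝ) ^ (((n:ℝ) - 2)/2) = ce
      generalize hQg : (⟪Lc M z, z⟫ : ℝ) = Q at hqzne ⊢
      field_simp
      ring
      try tauto
    · generalize (⟪Lc M gz, gz⟫ : ℝ) ^ (((n:ℝ) - 2)/2) = ce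
      generalize hQg : (⟪Lc M z, z⟫ : ℝ) = Q at hqzne ⊢
      field_simp
      ring
      try tauto
  rw [Filter.EventuallyEq.fderiv_eq hEE]
  rw [div_transform hM m hnm hx Fs DF hF]
  rw [congrArg (fun k => (⟪Lc M x, x⟫ : ℝ) ^ k) hnm]
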